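/- arXiv:0904.2061 — 2 statements merged into one kernel-verified Lean document; each statement's English description precedes it below -/
import Mathlib

section
/- For every integer n ≥ 2, consider the instance of selfish bin covering with bin volume b = 2n, 2n items of size 2n−2, and 4n items of size 1. The partition π consisting of n bins each containing two items of size 2n−2 and two bins each containing 2n items of size 1 is an FNE(III), with p(π) = n+2, while OPT = 2n. Consequently, the price of anarchy with respect to FNE(III) is at most 1/2. -/
open Finset

/-- Total size of the items in a bin. -/
def binSize {n : ℕ} (a : Fin n → ℕ) (B : Finset (Fin n)) : ℕ := ∑ j ∈ B, a j

/-- The social welfare of a partition: the number of covered bins. -/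
def welfare {n : ℕ} (a : Fin n → ℕ) (b : ℕ)
    (π : Finpartition (univ : Finset (Fin n))) : ℕ :=
  (π.parts.filter fun B => b ≤ binSize a B).card

/-- The payoff of item `j` when it lies in bin `B`. -/
def payoffIn {n : ℕ} (a : Fin n → ℕ) (b : ℕ) (j : Fin n) (B : Finset (Fin n)) : ℚ :=
  if b ≤ binSize a B then (a j : ℚ) / (binSize a B : ℚ) else 0

/-- Nash equilibrium. -/
def IsNE {n : ℕ} (a : Fin n → ℕ) (b : ℕ)
    (π : Finpartition (univ : Finset (Fin n))) : Prop :=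
  (∀ j : Fin n, ∀ B ∈ π.parts, j ∉ B →
      payoffIn a b j (insert j B) ≤ payoffIn a b j (π.part j)) ∧
  ∀ j : Fin n, payoffIn a b j {j} ≤ payoffIn a b j (π.part j)

/-- A partition is reasonable if at most one bin is uncovered. -/
def Reasonable {n : ℕ} (a : Fin n → ℕ) (b : ℕ)
    (π : Finpartition (univ : Finset (Fin n))) : Prop :=
  (π.parts.filter fun B => binSize a B < b).card ≤ 1

/-- A bin is minimal covered if it is covered and removing any member uncovers it. -/
def MinimalCovered {n : ℕ} (a : Fin n → ℕ) (b : ℕ) (B : Finset (Fin n)) : Prop :=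
  b ≤ binSize a B ∧ ∀ j ∈ B, binSize a (B.erase j) < b

/-- A partition is rational if it is reasonable and every covered bin is minimal covered. -/
def RationalPartition {n : ℕ} (a : Fin n → ℕ) (b : ℕ)
    (π : Finpartition (univ : Finset (Fin n))) : Prop :=
  Reasonable a b π ∧ ∀ B ∈ π.parts, b ≤ binSize a B → MinimalCovered a b B

/-- `B_m(π)`: the unique uncovered bin of a (rational) partition if one exists, `∅` otherwise. -/
def uncoveredBin {n : ℕ} (a : Fin n → ℕ) (b : ℕ)
    (π : Finpartition (univ : Finset (Fin n))) : Finset (Fin n) :=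
  (π.parts.filter fun B => binSize a B < b).sup id

/-- `δ(B) = s(B)` if `B` is covered, `+∞` otherwise. -/
def delta {n : ℕ} (a : Fin n → ℕ) (b : ℕ) (B : Finset (Fin n)) : ℕ∞ :=
  if b ≤ binSize a B then (binSize a B : ℕ∞) else ⊤

/-- Fireable Nash equilibrium of type (I). -/
def IsFNE1 {n : ℕ} (a : Fin n → ℕ) (b : ℕ)
    (π : Finpartition (univ : Finset (Fin n))) : Prop :=
  RationalPartition a b π ∧
  ¬ ∃ j : Fin n, b ≤ binSize a (π.part j) ∧
      MinimalCovered a b (insert j (uncoveredBin a b π)) ∧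
      binSize a (uncoveredBin a b π) + a j < binSize a (π.part j)

/-- Fireable Nash equilibrium of type (II). -/
def IsFNE2 {n : ℕ} (a : Fin n → ℕ) (b : ℕ)
    (π : Finpartition (univ : Finset (Fin n))) : Prop :=
  RationalPartition a b π ∧
  ¬ ∃ (j : Fin n) (E : Finset (Fin n)), b ≤ binSize a (π.part j) ∧
      E ⊆ uncoveredBin a b π ∧
      MinimalCovered a b (insert j (uncoveredBin a b π \ E)) ∧
      binSize a (uncoveredBin a b π \ E) + a j < binSize a (π.part j)

/-- Fireable Nash equilibrium of type (III). -/
def IsFNE3 {n : ℕ} (a : Fin n → ℕ) (b : ℕ)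
    (π : Finpartition (univ : Finset (Fin n))) : Prop :=
  RationalPartition a b π ∧
  ¬ ∃ (j : Fin n) (Bi E : Finset (Fin n)), Bi ∈ π.parts ∧ j ∉ Bi ∧ E ⊆ Bi ∧
      MinimalCovered a b (insert j (Bi \ E)) ∧
      ((binSize a (Bi \ E) + a j : ℕ) : ℕ∞) < min (delta a b Bi) (delta a b (π.part j))

/-- Modified strong Nash equilibrium. -/
def IsMSNE {n : ℕ} (a : Fin n → ℕ) (b : ℕ)
    (π : Finpartition (univ : Finset (Fin n))) : Prop :=
  RationalPartition a b π ∧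
  ¬ ∃ (Bi E : Finset (Fin n)), Bi ∈ π.parts ∧ b ≤ binSize a Bi ∧ E ⊆ Bi ∧
      binSize a (uncoveredBin a b π) < binSize a (Bi \ E) ∧
      MinimalCovered a b (uncoveredBin a b π ∪ E)

/-- Strong Nash equilibrium. -/
def IsSNE {n : ℕ} (a : Fin n → ℕ) (b : ℕ)
    (π : Finpartition (univ : Finset (Fin n))) : Prop :=
  ¬ ∃ B : Finset (Fin n), b ≤ binSize a B ∧
      ∀ j ∈ B, binSize a (π.part j) < b ∨ binSize a B < binSize a (π.part j)

/-- `F` is a minimum subset w.r.t. `(E, b)`. -/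
def IsMinSubset {n : ℕ} (a : Fin n → ℕ) (b : ℕ) (F E : Finset (Fin n)) : Prop :=
  F ⊆ E ∧ b ≤ binSize a F ∧ ∀ G ⊆ E, b ≤ binSize a G → binSize a F ≤ binSize a G

-- helpers
def fiberPart {N : ℕ} (c : Fin N → ℕ) : Finpartition (univ : Finset (Fin N)) where
  parts := univ.image fun j => univ.filter fun k => c k = c j
  supIndep := by
    rw [Finset.supIndep_iff_pairwiseDisjoint]
    intro B hB C hC hBC
    rw [Finset.mem_coe, Finset.mem_image] at hB hC
    obtain ⟨j, -, rfl⟩ := hB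
    obtain ⟨k, -, rfl⟩ := hC
    by_cases h : c j = c k
    · exact absurd (by rw [h]) hBC
    · simp only [Function.onFun, id]
      rw [Finset.disjoint_filter]
      intro x _ hx hx'
      exact h (hx ▸ hx')
  sup_parts := by
    apply le_antisymm (le_refl _ |>.trans le_top)
    intro j _
    simp only [mem_sup, id]
    exact ⟨_, mem_image_of_mem _ (mem_univ j), by simp⟩
  bot_notMem := by
    simp only [bot_eq_empty, mem_image, mem_univ, true_and]
    rintro ⟨j, hj⟩
    have : j ∈ (univ.filter fun k => c k = c j) := by simp
    rw [hj] at this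
    exact absurd this (notMem_empty j)

lemma fiberPart_mem_parts {N : ℕ} (c : Fin N → ℕ) (B : Finset (Fin N)) :
    B ∈ (fiberPart c).parts ↔ ∃ j, B = univ.filter fun k => c k = c j := by
  simp [fiberPart, eq_comm]

lemma fiberPart_part {N : ℕ} (c : Fin N → ℕ) (j : Fin N) :
    (fiberPart c).part j = univ.filter fun k => c k = c j := by
  refine (fiberPart c).eq_of_mem_parts ((fiberPart c).part_mem.2 (mem_univ j)) ?_
    ((fiberPart c).mem_part (mem_univ j)) (by simp)
  exact (fiberPart_mem_parts c _).2 ⟨j, rfl⟩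

lemma sum_parts_eq {N : ℕ} (a : Fin N → ℕ) (π : Finpartition (univ : Finset (Fin N))) :
    ∑ B ∈ π.parts, binSize a B = binSize a univ := by
  conv_rhs => rw [binSize, ← π.biUnion_parts]
  rw [Finset.sum_biUnion π.supIndep.pairwiseDisjoint]
  rfl

lemma card_filter_fin' (N : ℕ) (p : Fin N → Prop) [DecidablePred p]
    (q : ℕ → Prop) [DecidablePred q] (h : ∀ j : Fin N, p j ↔ q j.val) :
    (univ.filter p).card = ((Finset.range N).filter q).card := by
  rw [← Finset.card_image_of_injective (univ.filter p) Fin.val_injective]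
  congr 1
  ext k
  simp only [mem_image, mem_filter, mem_univ, true_and, mem_range]
  constructor
  · rintro ⟨j, hp, rfl⟩; exact ⟨j.isLt, (h j).1 hp⟩
  · rintro ⟨hk, hq⟩; exact ⟨⟨k, hk⟩, (h ⟨k, hk⟩).2 hq, rfl⟩

lemma arith1 (N : ℕ) (h : 2 ≤ N) : 2*N*(2*N-2) + 4*N = 4*N*N := by
  obtain ⟨m, rfl⟩ := Nat.exists_eq_add_of_le h
  have e : 2*(2+m)-2 = 2*m+2 := by omega
  rw [e]; ring

/-- the lower-bound instance for `PoA` w.r.t. FNE(III): bin volume `2n`,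
`2n` items of size `2n-2` and `4n` items of size `1`.  The partition with `n` bins of
two large items and two bins of `2n` small items is an FNE(III) with welfare `n+2`,
while `OPT = 2n`. -/
theorem stmt6 (n : ℕ) (hn : 2 ≤ n) :
    ∃ π : Finpartition (univ : Finset (Fin (6 * n))),
      ((univ.filter fun j : Fin (6 * n) => 2 * n ≤ (j : ℕ) ∧ (j : ℕ) < 4 * n) ∈ π.parts) ∧
      ((univ.filter fun j : Fin (6 * n) => 4 * n ≤ (j : ℕ)) ∈ π.parts) ∧
      (∀ i < n,
        (univ.filter fun j : Fin (6 * n) => (j : ℕ) = 2 * i ∨ (j : ℕ) = 2 * i + 1) ∈ π.parts) ∧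
      (∀ B ∈ π.parts,
        B = (univ.filter fun j : Fin (6 * n) => 2 * n ≤ (j : ℕ) ∧ (j : ℕ) < 4 * n) ∨
        B = (univ.filter fun j : Fin (6 * n) => 4 * n ≤ (j : ℕ)) ∨
        ∃ i < n,
          B = (univ.filter fun j : Fin (6 * n) => (j : ℕ) = 2 * i ∨ (j : ℕ) = 2 * i + 1)) ∧
      IsFNE3 (fun j : Fin (6 * n) => if (j : ℕ) < 2 * n then 2 * n - 2 else 1) (2 * n) π ∧
      welfare (fun j : Fin (6 * n) => if (j : ℕ) < 2 * n then 2 * n - 2 else 1) (2 * n) π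
        = n + 2 ∧
      (∀ σ : Finpartition (univ : Finset (Fin (6 * n))),
        welfare (fun j : Fin (6 * n) => if (j : ℕ) < 2 * n then 2 * n - 2 else 1) (2 * n) σ
          ≤ 2 * n) ∧
      (∃ σ : Finpartition (univ : Finset (Fin (6 * n))),
        welfare (fun j : Fin (6 * n) => if (j : ℕ) < 2 * n then 2 * n - 2 else 1) (2 * n) σ
          = 2 * n) := by
  set a : Fin (6*n) → ℕ := fun j => if (j:ℕ) < 2*n then 2*n-2 else 1 with ha
  set c : Fin (6*n) → ℕ :=
    fun j => if (j:ℕ) < 2*n then (j:ℕ)/2 else if (j:ℕ) < 4*n then n else n+1 with hc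
  set big1 : Finset (Fin (6*n)) :=
    univ.filter fun j => 2*n ≤ (j:ℕ) ∧ (j:ℕ) < 4*n with hbig1
  set big2 : Finset (Fin (6*n)) := univ.filter fun j => 4*n ≤ (j:ℕ) with hbig2
  set P : ℕ → Finset (Fin (6*n)) :=
    (fun i => univ.filter fun j => (j:ℕ) = 2*i ∨ (j:ℕ) = 2*i+1) with hPdef
  -- total size
  have hcard1 : big1.card = 2*n := by
    rw [hbig1, card_filter_fin' (6*n) _ (fun k => 2*n ≤ k ∧ k < 4*n) (fun j => Iff.rfl)]
    have : (Finset.range (6*n)).filter (fun k => 2*n ≤ k ∧ k < 4*n)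
        = Finset.Ico (2*n) (4*n) := by ext k; simp; omega
    rw [this, Nat.card_Ico]; omega
  have hcard2 : big2.card = 2*n := by
    rw [hbig2, card_filter_fin' (6*n) _ (fun k => 4*n ≤ k) (fun j => Iff.rfl)]
    have : (Finset.range (6*n)).filter (fun k => 4*n ≤ k)
        = Finset.Ico (4*n) (6*n) := by ext k; simp; omega
    rw [this, Nat.card_Ico]; omega
  have htot : binSize a univ = 4*n*n := by
    rw [binSize, ← Finset.sum_filter_add_sum_filter_not univ (fun j : Fin (6*n) => (j:ℕ) < 2*n) a]
    have e1 : ∑ j ∈ univ.filter (fun j : Fin (6*n) => (j:ℕ) < 2*n), a j = 2*n*(2*n-2) := by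
      rw [Finset.sum_congr rfl (g := fun _ => 2*n-2)
        (fun j hj => by simp only [ha]; rw [if_pos (mem_filter.mp hj).2])]
      rw [Finset.sum_const, smul_eq_mul,
        card_filter_fin' (6*n) _ (fun k => k < 2*n) (fun j => Iff.rfl)]
      have : (Finset.range (6*n)).filter (fun k => k < 2*n) = Finset.range (2*n) := by
        ext k; simp; omega
      rw [this, Finset.card_range]
    have e2 : ∑ j ∈ univ.filter (fun j : Fin (6*n) => ¬ (j:ℕ) < 2*n), a j = 4*n := by
      rw [Finset.sum_congr rfl (g := fun _ => 1)
        (fun j hj => by simp only [ha]; rw [if_neg (mem_filter.mp hj).2])]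
      rw [Finset.sum_const, smul_eq_mul, mul_one,
        card_filter_fin' (6*n) _ (fun k => ¬ k < 2*n) (fun j => Iff.rfl)]
      have : (Finset.range (6*n)).filter (fun k => ¬ k < 2*n) = Finset.Ico (2*n) (6*n) := by
        ext k; simp; omega
      rw [this, Nat.card_Ico]; omega
    rw [e1, e2]
    exact arith1 n hn
  -- fibers
  have hfibP : ∀ j : Fin (6*n), (j:ℕ) < 2*n →
      (univ.filter fun k => c k = c j) = P ((j:ℕ)/2) := by
    intro j hj
    ext k
    simp only [hc, hPdef, mem_filter, mem_univ, true_and]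
    split_ifs <;> omega
  have hfib1 : ∀ j : Fin (6*n), 2*n ≤ (j:ℕ) → (j:ℕ) < 4*n →
      (univ.filter fun k => c k = c j) = big1 := by
    intro j hj hj'
    ext k
    simp only [hc, hbig1, mem_filter, mem_univ, true_and]
    split_ifs <;> omega
  have hfib2 : ∀ j : Fin (6*n), 4*n ≤ (j:ℕ) →
      (univ.filter fun k => c k = c j) = big2 := by
    intro j hj
    ext k
    simp only [hc, hbig2, mem_filter, mem_univ, true_and]
    split_ifs <;> omega
  -- membership of the designated bins
  have hmem1 : big1 ∈ (fiberPart c).parts :=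
    (fiberPart_mem_parts c big1).2 ⟨⟨2*n, by omega⟩, (hfib1 _ (le_refl _) (by simp only [Fin.val_mk]; omega)).symm⟩
  have hmem2 : big2 ∈ (fiberPart c).parts :=
    (fiberPart_mem_parts c big2).2 ⟨⟨4*n, by omega⟩, (hfib2 _ (le_refl _)).symm⟩
  have hmemP : ∀ i < n, P i ∈ (fiberPart c).parts := by
    intro i hi
    refine (fiberPart_mem_parts c (P i)).2 ⟨⟨2*i, by omega⟩, ?_⟩
    have := hfibP ⟨2*i, by omega⟩ (by simp; omega)
    simp only [Fin.val_mk] at this ⊢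
    rw [this]
    congr 1
    omega
  have hclass : ∀ B ∈ (fiberPart c).parts,
      B = big1 ∨ B = big2 ∨ ∃ i < n, B = P i := by
    intro B hB
    obtain ⟨j, rfl⟩ := (fiberPart_mem_parts c B).1 hB
    by_cases h1 : (j:ℕ) < 2*n
    · exact Or.inr (Or.inr ⟨(j:ℕ)/2, by omega, hfibP j h1⟩)
    · by_cases h2 : (j:ℕ) < 4*n
      · exact Or.inl (hfib1 j (by omega) h2)
      · exact Or.inr (Or.inl (hfib2 j (by omega)))
  -- sizes
  have hsize1 : binSize a big1 = 2*n := by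
    rw [binSize, Finset.sum_congr rfl (g := fun _ => 1) (fun j hj => by
      simp only [ha]
      rw [if_neg]
      have := (mem_filter.mp (hbig1 ▸ hj)).2
      omega)]
    rw [Finset.sum_const, smul_eq_mul, mul_one, hcard1]
  have hsize2 : binSize a big2 = 2*n := by
    rw [binSize, Finset.sum_congr rfl (g := fun _ => 1) (fun j hj => by
      simp only [ha]
      rw [if_neg]
      have := (mem_filter.mp (hbig2 ▸ hj)).2
      omega)]
    rw [Finset.sum_const, smul_eq_mul, mul_one, hcard2]
  have hPpair : ∀ i (hi : i < n),
      P i = {(⟨2*i, by omega⟩ : Fin (6*n)), ⟨2*i+1, by omega⟩} := by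
    intro i hi
    ext k
    simp only [hPdef, mem_filter, mem_univ, true_and, mem_insert, mem_singleton, Fin.ext_iff]
  have hsizeP : ∀ i, i < n → binSize a (P i) = 4*n-4 := by
    intro i hi
    rw [hPpair i hi, binSize, Finset.sum_pair (by simp [Fin.ext_iff])]
    simp only [ha, Fin.val_mk]
    rw [if_pos (by omega), if_pos (by omega)]
    omega
  -- the key classification
  have hkey : ∀ B ∈ (fiberPart c).parts,
      (binSize a B = 2*n ∧ ∀ z ∈ B, 2*n ≤ (z:ℕ)) ∨
      (binSize a B = 4*n-4 ∧ ∀ z ∈ B, (z:ℕ) < 2*n) := by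
    intro B hB
    rcases hclass B hB with rfl | rfl | ⟨i, hi, rfl⟩
    · exact Or.inl ⟨hsize1, fun z hz => ((mem_filter.mp (hbig1 ▸ hz)).2).1⟩
    · exact Or.inl ⟨hsize2, fun z hz => by
        have := (mem_filter.mp (hbig2 ▸ hz)).2; omega⟩
    · refine Or.inr ⟨hsizeP i hi, fun z hz => ?_⟩
      have := (mem_filter.mp (hPdef ▸ hz)).2
      omega
  have hcov : ∀ B ∈ (fiberPart c).parts, 2*n ≤ binSize a B := by
    intro B hB
    rcases hkey B hB with ⟨h, -⟩ | ⟨h, -⟩ <;> omega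
  have hmc : ∀ B ∈ (fiberPart c).parts, MinimalCovered a (2*n) B := by
    intro B hB
    refine ⟨hcov B hB, fun j hj => ?_⟩
    have herase : a j + binSize a (B.erase j) = binSize a B :=
      Finset.add_sum_erase B a hj
    rcases hkey B hB with ⟨hs, hz⟩ | ⟨hs, hz⟩
    · have haj : a j = 1 := by
        simp only [ha]; rw [if_neg]; have := hz j hj; omega
      omega
    · have haj : a j = 2*n-2 := by
        simp only [ha]; rw [if_pos (hz j hj)]
      omega
  refine ⟨fiberPart c, hmem1, hmem2, hmemP, hclass, ⟨⟨?_, fun B hB _ => hmc B hB⟩, ?_⟩, ?_, ?_, ?_⟩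
  · -- Reasonable
    rw [Reasonable]
    have : ((fiberPart c).parts.filter fun B => binSize a B < 2*n) = ∅ := by
      rw [Finset.filter_eq_empty_iff]
      intro B hB
      have := hcov B hB
      omega
    rw [this]
    simp
  · -- no FNE3 deviation
    rintro ⟨j, Bi, E, hBi, hjBi, hE, ⟨hmc1, -⟩, hlt⟩
    have hpj := (fiberPart c).part_mem.2 (mem_univ j)
    have hjin := (fiberPart c).mem_part (mem_univ j)
    rw [delta, delta, if_pos (hcov _ hBi), if_pos (hcov _ hpj), lt_min_iff] at hlt
    obtain ⟨hlt1, hlt2⟩ := hlt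
    have h1 : binSize a (Bi \ E) + a j < binSize a Bi := by exact_mod_cast hlt1
    have h2 : binSize a (Bi \ E) + a j < binSize a ((fiberPart c).part j) := by
      exact_mod_cast hlt2
    have hins : binSize a (insert j (Bi \ E)) = a j + binSize a (Bi \ E) := by
      rw [binSize, Finset.sum_insert (fun h => hjBi (Finset.mem_sdiff.mp h).1)]; rfl
    rw [hins] at hmc1
    rcases hkey _ hpj with ⟨hs, hz⟩ | ⟨hs, hz⟩
    · rw [hs] at h2; omega
    · have hjlt : (j:ℕ) < 2*n := hz j hjin
      have haj : a j = 2*n-2 := by simp only [ha]; rw [if_pos hjlt]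
      rcases hkey _ hBi with ⟨hsB, hzB⟩ | ⟨hsB, hzB⟩
      · rw [hsB] at h1; omega
      · rw [hsB] at h1
        by_cases hne : (Bi \ E).Nonempty
        · obtain ⟨z, hzmem⟩ := hne
          have hzBi := (Finset.mem_sdiff.mp hzmem).1
          have haz : a z = 2*n-2 := by simp only [ha]; rw [if_pos (hzB z hzBi)]
          have hle : a z ≤ binSize a (Bi \ E) :=
            Finset.single_le_sum (fun _ _ => Nat.zero_le _) hzmem
          omega
        · rw [Finset.not_nonempty_iff_eq_empty] at hne
          rw [hne] at hmc1
          have : binSize a (∅ : Finset (Fin (6*n))) = 0 := rfl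
          omega
  · -- welfare = n + 2
    rw [welfare, Finset.filter_true_of_mem hcov]
    have hparts : (fiberPart c).parts
        = insert big1 (insert big2 ((Finset.range n).image P)) := by
      ext B
      simp only [mem_insert, mem_image, mem_range]
      constructor
      · intro hB
        rcases hclass B hB with h | h | ⟨i, hi, h⟩
        · exact Or.inl h
        · exact Or.inr (Or.inl h)
        · exact Or.inr (Or.inr ⟨i, hi, h.symm⟩)
      · rintro (rfl | rfl | ⟨i, hi, rfl⟩)
        · exact hmem1
        · exact hmem2
        · exact hmemP i hi
    rw [hparts]
    have hx1 : (⟨2*n, by omega⟩ : Fin (6*n)) ∈ big1 := by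
      simp only [hbig1, mem_filter, mem_univ, true_and, Fin.val_mk]
      omega
    have hx1' : (⟨2*n, by omega⟩ : Fin (6*n)) ∉ big2 := by
      simp only [hbig2, mem_filter, mem_univ, true_and, Fin.val_mk]
      omega
    have hxP : ∀ i < n, (⟨2*n, by omega⟩ : Fin (6*n)) ∉ P i := by
      intro i hi
      simp only [hPdef, mem_filter, mem_univ, true_and, Fin.val_mk]
      omega
    have hx2 : (⟨4*n, by omega⟩ : Fin (6*n)) ∈ big2 := by
      simp only [hbig2, mem_filter, mem_univ, true_and, Fin.val_mk]
      omega
    have hx2P : ∀ i < n, (⟨4*n, by omega⟩ : Fin (6*n)) ∉ P i := by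
      intro i hi
      simp only [hPdef, mem_filter, mem_univ, true_and, Fin.val_mk]
      omega
    rw [Finset.card_insert_of_notMem, Finset.card_insert_of_notMem,
      Finset.card_image_of_injOn, Finset.card_range]
    · intro i hi i' hi' hii'
      simp only [Finset.mem_coe, mem_range] at hi hi'
      have : (⟨2*i, by omega⟩ : Fin (6*n)) ∈ P i := by
        simp only [hPdef, mem_filter, mem_univ, true_and, Fin.val_mk]
        exact Or.inl trivial
      rw [hii'] at this
      simp only [hPdef, mem_filter, mem_univ, true_and, Fin.val_mk] at this
      omega
    · intro hmem
      obtain ⟨i, hi, hP2⟩ := Finset.mem_image.mp hmem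
      rw [mem_range] at hi
      exact hx2P i hi (hP2.symm ▸ hx2)
    · intro hmem
      rcases Finset.mem_insert.mp hmem with h | h
      · exact hx1' (h ▸ hx1)
      · obtain ⟨i, hi, hP2⟩ := Finset.mem_image.mp h
        rw [mem_range] at hi
        exact hxP i hi (hP2 ▸ hx1)
  · -- OPT upper bound
    intro σ
    have hsub : σ.parts.filter (fun B => 2*n ≤ binSize a B) ⊆ σ.parts :=
      Finset.filter_subset _ _
    have h1 : (welfare a (2*n) σ) • (2*n)
        ≤ ∑ B ∈ σ.parts.filter (fun B => 2*n ≤ binSize a B), binSize a B :=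
      Finset.card_nsmul_le_sum _ _ _ (fun B hB => (mem_filter.mp hB).2)
    have h2 : ∑ B ∈ σ.parts.filter (fun B => 2*n ≤ binSize a B), binSize a B
        ≤ ∑ B ∈ σ.parts, binSize a B := Finset.sum_le_sum_of_subset hsub
    rw [sum_parts_eq, htot] at h2
    have h3 : welfare a (2*n) σ * (2*n) ≤ (2*n) * (2*n) := by
      have : (4:ℕ)*n*n = 2*n*(2*n) := by ring
      rw [smul_eq_mul] at h1
      omega
    exact Nat.le_of_mul_le_mul_right h3 (by omega)
  · -- OPT achieved
    set c' : Fin (6*n) → ℕ :=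
      fun j => if (j:ℕ) < 2*n then (j:ℕ) else ((j:ℕ)-2*n)/2 with hc'
    set Q : ℕ → Finset (Fin (6*n)) :=
      (fun i => univ.filter fun k =>
        (k:ℕ) = i ∨ (k:ℕ) = 2*n+2*i ∨ (k:ℕ) = 2*n+2*i+1) with hQdef
    have hQ : ∀ i, i < 2*n → (univ.filter fun k => c' k = i) = Q i := by
      intro i hi
      ext k
      simp only [hc', hQdef, mem_filter, mem_univ, true_and]
      split_ifs <;> omega
    have hlab : ∀ j : Fin (6*n), c' j < 2*n := by
      intro j
      have hj := j.isLt
      simp only [hc']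
      split_ifs <;> omega
    have hQtriple : ∀ i (hi : i < 2*n),
        Q i = {(⟨i, by omega⟩ : Fin (6*n)), ⟨2*n+2*i, by omega⟩, ⟨2*n+2*i+1, by omega⟩} := by
      intro i hi
      ext k
      simp only [hQdef, mem_filter, mem_univ, true_and, mem_insert, mem_singleton, Fin.ext_iff]
    have hsizeQ : ∀ i, i < 2*n → binSize a (Q i) = 2*n := by
      intro i hi
      rw [hQtriple i hi, binSize]
      rw [Finset.sum_insert (by simp [Fin.ext_iff]; omega),
        Finset.sum_pair (by simp [Fin.ext_iff])]
      simp only [ha, Fin.val_mk]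
      rw [if_pos (by omega), if_neg (by omega), if_neg (by omega)]
      omega
    have hpartsQ : ∀ B ∈ (fiberPart c').parts, ∃ i < 2*n, B = Q i := by
      intro B hB
      obtain ⟨j, rfl⟩ := (fiberPart_mem_parts c' B).1 hB
      exact ⟨c' j, hlab j, hQ (c' j) (hlab j)⟩
    refine ⟨fiberPart c', ?_⟩
    have hcov' : ∀ B ∈ (fiberPart c').parts, 2*n ≤ binSize a B := by
      intro B hB
      obtain ⟨i, hi, rfl⟩ := hpartsQ B hB
      rw [hsizeQ i hi]
    rw [welfare, Finset.filter_true_of_mem hcov']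
    have hQeqFib : ∀ i, i < 2*n → Q i ∈ (fiberPart c').parts := by
      intro i hi
      refine (fiberPart_mem_parts c' (Q i)).2 ⟨⟨i, by omega⟩, ?_⟩
      rw [← hQ i hi]
      congr 1
      funext k
      congr 1
      simp only [hc', Fin.val_mk]
      rw [if_pos hi]
    have hparts' : (fiberPart c').parts = (Finset.range (2*n)).image Q := by
      ext B
      simp only [mem_image, mem_range]
      constructor
      · intro hB
        obtain ⟨i, hi, rfl⟩ := hpartsQ B hB
        exact ⟨i, hi, rfl⟩
      · rintro ⟨i, hi, rfl⟩
        exact hQeqFib i hi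
    rw [hparts', Finset.card_image_of_injOn, Finset.card_range]
    intro i hi i' hi' hii'
    simp only [Finset.mem_coe, mem_range] at hi hi'
    have : (⟨i, by omega⟩ : Fin (6*n)) ∈ Q i := by
      simp only [hQdef, mem_filter, mem_univ, true_and, Fin.val_mk]
      exact Or.inl trivial
    rw [hii'] at this
    simp only [hQdef, mem_filter, mem_univ, true_and, Fin.val_mk] at this
    omega
end

section
/- For every rational partition π of an instance of selfish bin covering, there exists an FNE(III) partition π' of the same instance with p(π') ≥ p(π). -/
open Finset

section Helpers

variable {n : ℕ} (a : Fin n → ℕ) (b : ℕ)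

lemma binSize_mono {s t : Finset (Fin n)} (h : s ⊆ t) : binSize a s ≤ binSize a t :=
  Finset.sum_le_sum_of_subset h

lemma binSize_le_univ (s : Finset (Fin n)) : binSize a s ≤ binSize a (univ : Finset (Fin n)) :=
  binSize_mono a (Finset.subset_univ s)

lemma decomp (hb : 0 < b) (U : Finset (Fin n)) :
    ∃ P : Finset (Finset (Fin n)),
      (P : Set (Finset (Fin n))).PairwiseDisjoint id ∧
      P.sup id = U ∧
      (∀ B ∈ P, B.Nonempty) ∧
      (∀ B ∈ P, b ≤ binSize a B → MinimalCovered a b B) ∧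
      (P.filter fun B => binSize a B < b).card ≤ 1 ∧
      (b ≤ binSize a U → ∃ B ∈ P, b ≤ binSize a B) := by
  induction U using Finset.strongInduction with
  | _ U ih =>
    by_cases hU : b ≤ binSize a U
    · have h𝒞 : (U.powerset.filter fun F => b ≤ binSize a F).Nonempty :=
        ⟨U, by simp [hU]⟩
      obtain ⟨F, hF, hFmin⟩ := Finset.exists_min_image _ Finset.card h𝒞
      simp only [Finset.mem_filter, Finset.mem_powerset] at hF
      obtain ⟨hFU, hFcov⟩ := hF
      have hFne : F.Nonempty := by
        rcases Finset.eq_empty_or_nonempty F with h | h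
        · exfalso; rw [h] at hFcov; simp [binSize] at hFcov; omega
        · exact h
      have hFmc : MinimalCovered a b F := by
        refine ⟨hFcov, fun i hi => ?_⟩
        by_contra hcon
        push_neg at hcon
        have h1 := hFmin (F.erase i) (by
          simp only [Finset.mem_filter, Finset.mem_powerset]
          exact ⟨(Finset.erase_subset _ _).trans hFU, hcon⟩)
        have h2 := Finset.card_erase_of_mem hi
        have h3 : 0 < F.card := Finset.card_pos.mpr hFne
        omega
      have hss : U \ F ⊂ U := by
        obtain ⟨i, hi⟩ := hFne
        refine Finset.ssubset_iff_of_subset (Finset.sdiff_subset) |>.mpr ⟨i, hFU hi, by simp [hi]⟩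
      obtain ⟨P, hPD, hPsup, hPne, hPmc, hPunc, -⟩ := ih _ hss
      have hFP : F ∉ P := by
        intro hFmem
        have hsub : F ⊆ U \ F := by
          have := Finset.le_sup (f := id) hFmem
          rw [hPsup] at this; exact this
        obtain ⟨i, hi⟩ := hFne
        exact (Finset.mem_sdiff.mp (hsub hi)).2 hi
      have hdisjF : ∀ B ∈ P, Disjoint F B := by
        intro B hB
        have hsub : B ⊆ U \ F := by
          have := Finset.le_sup (f := id) hB
          rw [hPsup] at this; exact this
        exact Finset.disjoint_left.mpr fun x hx hxB => (Finset.mem_sdiff.mp (hsub hxB)).2 hx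
      refine ⟨insert F P, ?_, ?_, ?_, ?_, ?_, fun _ => ⟨F, Finset.mem_insert_self _ _, hFcov⟩⟩
      · rw [Finset.coe_insert]
        exact hPD.insert (fun B hB _ => (hdisjF B hB))
      · rw [Finset.sup_insert, hPsup]
        simpa using Finset.union_sdiff_of_subset hFU
      · intro B hB
        rcases Finset.mem_insert.mp hB with h | h
        · exact h ▸ hFne
        · exact hPne B h
      · intro B hB
        rcases Finset.mem_insert.mp hB with h | h
        · exact fun _ => h ▸ hFmc
        · exact hPmc B h
      · rw [Finset.filter_insert, if_neg (by omega)]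
        exact hPunc
    · push_neg at hU
      rcases Finset.eq_empty_or_nonempty U with h | h
      · subst h
        exact ⟨∅, by simp, by simp, by simp, by simp, by simp, fun hc => absurd hc (by simpa using not_le.mpr hU)⟩
      · refine ⟨{U}, by simp, by simp, ?_, ?_, ?_, fun hc => absurd hc (not_le.mpr hU)⟩
        · intro B hB; rw [Finset.mem_singleton] at hB; exact hB ▸ h
        · intro B hB hcov; rw [Finset.mem_singleton] at hB; subst hB; omega
        · simp [Finset.filter_singleton, hU]

end Helpers
section Improve

variable {n : ℕ} (a : Fin n → ℕ) (b : ℕ)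

/-- weight of a covered bin used in the potential -/
def gB (a : Fin n → ℕ) (B : Finset (Fin n)) : ℕ :=
  2 ^ (binSize a (univ : Finset (Fin n)) - binSize a B)

def gpart (π : Finpartition (univ : Finset (Fin n))) : ℕ :=
  ∑ B ∈ π.parts.filter fun B => b ≤ binSize a B, gB a B

def psi (π : Finpartition (univ : Finset (Fin n))) : ℕ :=
  welfare a b π * (n * 2 ^ (binSize a (univ : Finset (Fin n))) + 1) + gpart a b π

lemma welfare_le (π : Finpartition (univ : Finset (Fin n))) : welfare a b π ≤ n := by
  have h1 : (π.parts.filter fun B => b ≤ binSize a B).card ≤ π.parts.card :=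
    Finset.card_filter_le _ _
  have h2 := π.card_parts_le_card
  simp only [Finset.card_univ, Fintype.card_fin] at h2
  exact le_trans h1 h2

lemma gpart_le (π : Finpartition (univ : Finset (Fin n))) :
    gpart a b π ≤ n * 2 ^ (binSize a (univ : Finset (Fin n))) := by
  unfold gpart
  calc ∑ B ∈ π.parts.filter fun B => b ≤ binSize a B, gB a B
      ≤ ∑ _B ∈ π.parts.filter fun B => b ≤ binSize a B,
          2 ^ (binSize a (univ : Finset (Fin n))) := by
        refine Finset.sum_le_sum fun B _ => ?_
        exact Nat.pow_le_pow_right (by norm_num) (Nat.sub_le _ _)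
    _ = (π.parts.filter fun B => b ≤ binSize a B).card *
          2 ^ (binSize a (univ : Finset (Fin n))) := by
        rw [Finset.sum_const, smul_eq_mul]
    _ ≤ n * 2 ^ (binSize a (univ : Finset (Fin n))) := by
        exact Nat.mul_le_mul_right _ (welfare_le a b π)

lemma psi_lt (π : Finpartition (univ : Finset (Fin n))) :
    psi a b π < (n + 1) * (n * 2 ^ (binSize a (univ : Finset (Fin n))) + 1) := by
  have h1 := welfare_le a b π
  have h2 := gpart_le a b π
  unfold psi
  nlinarith

lemma pow2_lt {W v s : ℕ} (h : v < s) (hs : s ≤ W) : 2 ^ (W - s) < 2 ^ (W - v) :=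
  Nat.pow_lt_pow_right (by norm_num) (by omega)

lemma pow2_add_le {W v s t : ℕ} (hs : v < s) (ht : v < t) (hsW : s ≤ W) (htW : t ≤ W) :
    2 ^ (W - s) + 2 ^ (W - t) ≤ 2 ^ (W - v) := by
  obtain ⟨k, hk⟩ : ∃ k, W - v = k + 1 := ⟨W - v - 1, by omega⟩
  have h1 : 2 ^ (W - s) ≤ 2 ^ k := Nat.pow_le_pow_right (by norm_num) (by omega)
  have h2 : 2 ^ (W - t) ≤ 2 ^ k := Nat.pow_le_pow_right (by norm_num) (by omega)
  have h3 : 2 ^ k + 2 ^ k = 2 ^ (k + 1) := by rw [pow_succ]; ring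
  rw [hk]
  omega

lemma improve (ha : ∀ j, 0 < a j) (hab : ∀ j, a j < b)
    (π : Finpartition (univ : Finset (Fin n))) (hπ : RationalPartition a b π)
    (j : Fin n) (Bi E : Finset (Fin n)) (hBi : Bi ∈ π.parts) (hjBi : j ∉ Bi)
    (hE : E ⊆ Bi) (hN : MinimalCovered a b (insert j (Bi \ E)))
    (hv : ((binSize a (Bi \ E) + a j : ℕ) : ℕ∞) < min (delta a b Bi) (delta a b (π.part j))) :
    ∃ π' : Finpartition (univ : Finset (Fin n)),
      RationalPartition a b π' ∧ welfare a b π ≤ welfare a b π' ∧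
      psi a b π < psi a b π' := by
  have hb : 0 < b := lt_trans (ha j) (hab j)
  set W := binSize a (univ : Finset (Fin n)) with hWdef
  set Bj := π.part j with hBjdef
  have hBj : Bj ∈ π.parts := π.part_mem.mpr (Finset.mem_univ j)
  have hjBj : j ∈ Bj := π.mem_part (Finset.mem_univ j)
  have hBij : Bi ≠ Bj := fun h => hjBi (h ▸ hjBj)
  have hPD : (π.parts : Set (Finset (Fin n))).PairwiseDisjoint id :=
    Finset.supIndep_iff_pairwiseDisjoint.mp π.supIndep
  set N := insert j (Bi \ E) with hNdef
  set v := binSize a (Bi \ E) + a j with hvdef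
  have hjBiE : j ∉ Bi \ E := fun h => hjBi (Finset.mem_sdiff.mp h).1
  have hNsize : binSize a N = v := by
    rw [hNdef, hvdef, binSize, Finset.sum_insert hjBiE]
    unfold binSize; omega
  have hvb : b ≤ v := hNsize ▸ hN.1
  have hNuniv : N ⊆ univ := Finset.subset_univ _
  have hvW : v ≤ W := hNsize ▸ binSize_le_univ a N
  have hBiW : binSize a Bi ≤ W := binSize_le_univ a Bi
  have hBjW : binSize a Bj ≤ W := binSize_le_univ a Bj
  -- consequences of hv
  have hvBi : b ≤ binSize a Bi → v < binSize a Bi := by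
    intro h
    have h1 := lt_of_lt_of_le hv (min_le_left _ _)
    rw [delta, if_pos h] at h1
    exact_mod_cast h1
  have hvBj : b ≤ binSize a Bj → v < binSize a Bj := by
    intro h
    have h1 := lt_of_lt_of_le hv (min_le_right _ _)
    rw [delta, if_pos h] at h1
    exact_mod_cast h1
  have hcBiBj : b ≤ binSize a Bi ∨ b ≤ binSize a Bj := by
    by_contra hcon
    push_neg at hcon
    have hsub : ({Bi, Bj} : Finset (Finset (Fin n))) ⊆
        π.parts.filter fun B => binSize a B < b := by
      intro B hB
      rcases Finset.mem_insert.mp hB with h | h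
      · subst h; exact Finset.mem_filter.mpr ⟨hBi, hcon.1⟩
      · rw [Finset.mem_singleton] at h; subst h; exact Finset.mem_filter.mpr ⟨hBj, hcon.2⟩
    have hcard : 2 ≤ (π.parts.filter fun B => binSize a B < b).card := by
      have := Finset.card_le_card hsub
      rwa [Finset.card_pair hBij] at this
    have := hπ.1
    rw [Reasonable] at this
    omega
  -- the kept covered bins
  set Kc := π.parts.filter (fun B => b ≤ binSize a B) with hKcdef
  set K := (Kc.erase Bi).erase Bj with hKdef
  have hKsub : K ⊆ π.parts := by
    intro B hB
    exact (Finset.mem_filter.mp (Finset.mem_of_mem_erase (Finset.mem_of_mem_erase hB))).1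
  have hKcov : ∀ B ∈ K, b ≤ binSize a B := by
    intro B hB
    exact (Finset.mem_filter.mp (Finset.mem_of_mem_erase (Finset.mem_of_mem_erase hB))).2
  have hKne : ∀ B ∈ K, B ≠ Bi ∧ B ≠ Bj := by
    intro B hB
    exact ⟨Finset.ne_of_mem_erase (Finset.mem_of_mem_erase hB), Finset.ne_of_mem_erase hB⟩
  have hKdisjBi : ∀ B ∈ K, Disjoint B Bi := fun B hB =>
    hPD (hKsub hB) hBi (hKne B hB).1
  have hKdisjBj : ∀ B ∈ K, Disjoint B Bj := fun B hB =>
    hPD (hKsub hB) hBj (hKne B hB).2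
  have hKdisjN : ∀ B ∈ K, Disjoint B N := by
    intro B hB
    rw [hNdef, Finset.disjoint_insert_right]
    constructor
    · exact fun h => Finset.disjoint_left.mp (hKdisjBj B hB) h hjBj
    · exact Finset.disjoint_of_subset_right (Finset.sdiff_subset.trans (subset_refl Bi))
        (hKdisjBi B hB)
  have hKsupdisjN : Disjoint (K.sup id) N := by
    rw [Finset.disjoint_sup_left]
    exact fun B hB => hKdisjN B hB
  set U := (univ : Finset (Fin n)) \ (K.sup id ∪ N) with hUdef
  have hUdisj : Disjoint (K.sup id ∪ N) U := Finset.disjoint_sdiff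
  obtain ⟨P, hPDp, hPsup, hPne, hPmc, hPunc, hPcov⟩ := decomp a b hb U
  have hPsubU : ∀ B ∈ P, B ⊆ U := by
    intro B hB
    have := Finset.le_sup (f := id) hB
    rw [hPsup] at this; exact this
  -- parts of new partition
  set parts' : Finset (Finset (Fin n)) := K ∪ insert N P with hparts'
  have hjK : ∀ B ∈ K, j ∉ B := fun B hB h =>
    Finset.disjoint_left.mp (hKdisjBj B hB) h hjBj
  have hNnotK : N ∉ K := fun h => hjK N h (Finset.mem_insert_self _ _)
  have hNnotP : N ∉ P := by
    intro h
    have h1 : N ⊆ U := hPsubU N h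
    have h2 : j ∈ U := h1 (Finset.mem_insert_self _ _)
    rw [hUdef, Finset.mem_sdiff] at h2
    exact h2.2 (Finset.mem_union_right _ (Finset.mem_insert_self _ _))
  have hKnotP : ∀ B ∈ K, B ∉ P := by
    intro B hB h
    have h1 : B ⊆ U := hPsubU B h
    have h2 : B ⊆ K.sup id := Finset.le_sup (f := id) hB
    have h3 : B.Nonempty := Finset.nonempty_of_ne_empty (π.ne_bot (hKsub hB))
    obtain ⟨x, hx⟩ := h3
    have := (Finset.mem_sdiff.mp (h1 hx)).2
    exact this (Finset.mem_union_left _ (h2 hx))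
  have hKdisjInsNP : Disjoint K (insert N P) := by
    rw [Finset.disjoint_right]
    intro B hB hBK
    rcases Finset.mem_insert.mp hB with h | h
    · exact hNnotK (h ▸ hBK)
    · exact hKnotP B hBK h
  -- disjointness of bins
  have hbinsdisj : (parts' : Set (Finset (Fin n))).PairwiseDisjoint id := by
    intro x hx y hy hxy
    rw [hparts', Finset.coe_union, Finset.coe_insert] at hx hy
    have hcase : ∀ z, z ∈ (↑K : Set (Finset (Fin n))) ∪ insert N ↑P →
        z ∈ (↑K : Set (Finset (Fin n))) ∨ z = N ∨ z ∈ (↑P : Set (Finset (Fin n))) := by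
      intro z hz
      rcases hz with h | h
      · exact Or.inl h
      · rcases h with h | h
        · exact Or.inr (Or.inl h)
        · exact Or.inr (Or.inr h)
    have hNdisjP : ∀ B ∈ P, Disjoint N B := fun B hB =>
      Finset.disjoint_of_subset_right (hPsubU B hB)
        (Finset.disjoint_of_subset_left (Finset.subset_union_right) hUdisj)
    have hKdisjP : ∀ B ∈ K, ∀ B' ∈ P, Disjoint B B' := by
      intro B hB B' hB'
      refine Finset.disjoint_of_subset_right (hPsubU B' hB') ?_
      refine Finset.disjoint_of_subset_left (Finset.le_sup (f := id) hB) ?_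
      exact Finset.disjoint_of_subset_left (Finset.subset_union_left) hUdisj
    rcases hcase x hx with hxK | hxN | hxP <;> rcases hcase y hy with hyK | hyN | hyP
    · exact hPD (hKsub hxK) (hKsub hyK) (fun h => hxy (by exact_mod_cast h))
    · subst hyN; exact hKdisjN x hxK
    · exact hKdisjP x hxK y hyP
    · subst hxN; exact (hKdisjN y hyK).symm
    · subst hxN; subst hyN; exact absurd rfl hxy
    · subst hxN; exact hNdisjP y hyP
    · exact (hKdisjP y hyK x hxP).symm
    · subst hyN; exact (hNdisjP x hxP).symm
    · exact hPDp hxP hyP hxy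
  have hsup' : parts'.sup id = (univ : Finset (Fin n)) := by
    rw [hparts', Finset.sup_union, Finset.sup_insert, hPsup]
    have : (K.sup id ⊔ (id N ⊔ U)) = (K.sup id ∪ N) ∪ U := by
      simp [Finset.sup_eq_union, Finset.union_assoc]
    rw [this, hUdef, Finset.union_sdiff_of_subset (Finset.subset_univ _)]
  have hbot' : ⊥ ∉ parts' := by
    rw [hparts', Finset.mem_union]
    rintro (h | h)
    · exact π.bot_notMem (hKsub h)
    · rcases Finset.mem_insert.mp h with h | h
      · exact absurd h.symm (Finset.insert_ne_empty _ _)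
      · obtain ⟨x, hx⟩ := hPne _ h
        simp_all
  set π' : Finpartition (univ : Finset (Fin n)) :=
    ⟨parts', Finset.supIndep_iff_pairwiseDisjoint.mpr hbinsdisj, hsup', hbot'⟩ with hπ'def
  have hπ'parts : π'.parts = parts' := rfl
  -- covered bins of the new partition
  have hNcov : b ≤ binSize a N := by rw [hNsize]; exact hvb
  set Pf := P.filter (fun B => b ≤ binSize a B) with hPfdef
  have hNPf : N ∉ Pf := fun h => hNnotP (Finset.filter_subset _ _ h)
  have hdisj2 : Disjoint K (insert N Pf) :=
    Finset.disjoint_of_subset_right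
      (Finset.insert_subset_insert _ (Finset.filter_subset _ _)) hKdisjInsNP
  have hcovparts' : parts'.filter (fun B => b ≤ binSize a B) = K ∪ insert N Pf := by
    rw [hparts', Finset.filter_union, Finset.filter_insert, if_pos hNcov,
      Finset.filter_true_of_mem hKcov]
  have hwelf' : welfare a b π' = K.card + (1 + Pf.card) := by
    rw [welfare, hπ'parts, hcovparts', Finset.card_union_of_disjoint hdisj2,
      Finset.card_insert_of_notMem hNPf]
    omega
  have hg' : gpart a b π' = (∑ B ∈ K, gB a B) + (gB a N + ∑ B ∈ Pf, gB a B) := by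
    rw [gpart, hπ'parts, hcovparts', Finset.sum_union hdisj2, Finset.sum_insert hNPf]
  have hwelfold : welfare a b π = Kc.card := rfl
  have hgold : gpart a b π = ∑ B ∈ Kc, gB a B := rfl
  have hgBN : gB a N = 2 ^ (W - v) := by rw [gB, hNsize]
  have hrat' : RationalPartition a b π' := by
    constructor
    · rw [Reasonable, hπ'parts, hparts', Finset.filter_union, Finset.filter_insert,
        if_neg (by rw [hNsize]; omega),
        Finset.filter_false_of_mem (fun B hB => not_lt.mpr (hKcov B hB)),
        Finset.empty_union]
      exact hPunc
    · intro B hB hcov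
      rw [hπ'parts, hparts', Finset.mem_union] at hB
      rcases hB with h | h
      · exact hπ.2 B (hKsub h) hcov
      · rcases Finset.mem_insert.mp h with h | h
        · exact h ▸ hN
        · exact hPmc B h hcov
  have hmain : welfare a b π ≤ welfare a b π' ∧ gpart a b π < gpart a b π' := by
    by_cases hBic : b ≤ binSize a Bi <;> by_cases hBjc : b ≤ binSize a Bj
    · -- both covered
      have hBiKc : Bi ∈ Kc := Finset.mem_filter.mpr ⟨hBi, hBic⟩
      have hBjKc : Bj ∈ Kc.erase Bi := Finset.mem_erase.mpr ⟨hBij.symm, Finset.mem_filter.mpr ⟨hBj, hBjc⟩⟩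
      have e1 := Finset.card_erase_of_mem hBiKc
      have e2 : K.card = (Kc.erase Bi).card - 1 := Finset.card_erase_of_mem hBjKc
      have e3 : 0 < (Kc.erase Bi).card := Finset.card_pos.mpr ⟨Bj, hBjKc⟩
      have e4 : 0 < Kc.card := Finset.card_pos.mpr ⟨Bi, hBiKc⟩
      have s1 : (∑ B ∈ K, gB a B) + gB a Bj = ∑ B ∈ Kc.erase Bi, gB a B :=
        Finset.sum_erase_add _ _ hBjKc
      have s2 : (∑ B ∈ Kc.erase Bi, gB a B) + gB a Bi = ∑ B ∈ Kc, gB a B :=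
        Finset.sum_erase_add _ _ hBiKc
      -- the leftover pool is covered
      have hdisjBiBj : Disjoint Bi Bj := hPD hBi hBj hBij
      have hEU : E ⊆ U := by
        intro x hx
        rw [hUdef, Finset.mem_sdiff]
        refine ⟨Finset.mem_univ _, ?_⟩
        rw [Finset.mem_union]
        rintro (h | h)
        · obtain ⟨B, hBK, hxB⟩ := Finset.mem_sup.mp h
          exact Finset.disjoint_left.mp (hKdisjBi B hBK) hxB (hE hx)
        · rcases Finset.mem_insert.mp h with h | h
          · exact hjBi (h ▸ hE hx)
          · exact (Finset.mem_sdiff.mp h).2 hx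
      have hBjU : Bj.erase j ⊆ U := by
        intro x hx
        obtain ⟨hxj, hxBj⟩ := Finset.mem_erase.mp hx
        rw [hUdef, Finset.mem_sdiff]
        refine ⟨Finset.mem_univ _, ?_⟩
        rw [Finset.mem_union]
        rintro (h | h)
        · obtain ⟨B, hBK, hxB⟩ := Finset.mem_sup.mp h
          exact Finset.disjoint_left.mp (hKdisjBj B hBK) hxB hxBj
        · rcases Finset.mem_insert.mp h with h | h
          · exact hxj h
          · exact Finset.disjoint_left.mp hdisjBiBj (Finset.mem_sdiff.mp h).1 hxBj
      have hdisjEBj : Disjoint E (Bj.erase j) :=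
        Finset.disjoint_of_subset_left hE
          (Finset.disjoint_of_subset_right (Finset.erase_subset _ _) hdisjBiBj)
      have hsum1 : binSize a E + binSize a (Bj.erase j) = binSize a (E ∪ Bj.erase j) :=
        (Finset.sum_union hdisjEBj).symm
      have hsum2 : binSize a (E ∪ Bj.erase j) ≤ binSize a U :=
        binSize_mono a (Finset.union_subset hEU hBjU)
      have hsum3 : binSize a (Bj.erase j) + a j = binSize a Bj :=
        Finset.sum_erase_add _ _ hjBj
      have hsum4 : binSize a (Bi \ E) + binSize a E = binSize a Bi :=
        Finset.sum_sdiff hE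
      have hja : a j < binSize a E := by
        have := hvBi hBic
        omega
      have hUcov : b ≤ binSize a U := by omega
      obtain ⟨B0, hB0P, hB0c⟩ := hPcov hUcov
      have hB0Pf : B0 ∈ Pf := Finset.mem_filter.mpr ⟨hB0P, hB0c⟩
      have hPfpos : 0 < ∑ B ∈ Pf, gB a B :=
        Finset.sum_pos (fun B _ => pow_pos (by norm_num) _) ⟨B0, hB0Pf⟩
      have hPfcard : 0 < Pf.card := Finset.card_pos.mpr ⟨B0, hB0Pf⟩
      have hpow : gB a Bi + gB a Bj ≤ gB a N := by
        rw [hgBN, gB, gB]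
        exact pow2_add_le (hvBi hBic) (hvBj hBjc) hBiW hBjW
      constructor
      · rw [hwelfold, hwelf']; omega
      · rw [hgold, hg']; omega
    · -- Bi covered, Bj not
      have hBiKc : Bi ∈ Kc := Finset.mem_filter.mpr ⟨hBi, hBic⟩
      have hBjKc : Bj ∉ Kc.erase Bi := fun h => hBjc (Finset.mem_filter.mp (Finset.mem_of_mem_erase h)).2
      have hKeq : K = Kc.erase Bi := by rw [hKdef, Finset.erase_eq_of_notMem hBjKc]
      have e1 := Finset.card_erase_of_mem hBiKc
      have e4 : 0 < Kc.card := Finset.card_pos.mpr ⟨Bi, hBiKc⟩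
      have s2 : (∑ B ∈ K, gB a B) + gB a Bi = ∑ B ∈ Kc, gB a B := by
        rw [hKeq]; exact Finset.sum_erase_add _ _ hBiKc
      have hpow : gB a Bi < gB a N := by
        rw [hgBN, gB]
        exact pow2_lt (hvBi hBic) hBiW
      constructor
      · rw [hwelfold, hwelf', hKeq]; omega
      · rw [hgold, hg']; omega
    · -- Bj covered, Bi not
      have hBiKc : Bi ∉ Kc := fun h => hBic (Finset.mem_filter.mp h).2
      have hBjKc : Bj ∈ Kc := Finset.mem_filter.mpr ⟨hBj, hBjc⟩
      have hKeq : K = Kc.erase Bj := by rw [hKdef, Finset.erase_eq_of_notMem hBiKc]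
      have e1 := Finset.card_erase_of_mem hBjKc
      have e4 : 0 < Kc.card := Finset.card_pos.mpr ⟨Bj, hBjKc⟩
      have s2 : (∑ B ∈ K, gB a B) + gB a Bj = ∑ B ∈ Kc, gB a B := by
        rw [hKeq]; exact Finset.sum_erase_add _ _ hBjKc
      have hpow : gB a Bj < gB a N := by
        rw [hgBN, gB]
        exact pow2_lt (hvBj hBjc) hBjW
      constructor
      · rw [hwelfold, hwelf', hKeq]; omega
      · rw [hgold, hg']; omega
    · exfalso; rcases hcBiBj with h | h
      · exact hBic h
      · exact hBjc h
  refine ⟨π', hrat', hmain.1, ?_⟩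
  rw [psi, psi, ← hWdef]
  have h1 := Nat.mul_le_mul_right (n * 2 ^ W + 1) hmain.1
  have h2 := hmain.2
  omega

end Improve

/-- every rational partition can be turned into an FNE(III) without
decreasing the social welfare. -/
theorem stmt7 (n : ℕ) (hn : 1 ≤ n) (a : Fin n → ℕ) (b : ℕ)
    (ha : ∀ j, 0 < a j) (hab : ∀ j, a j < b)
    (π : Finpartition (univ : Finset (Fin n))) (hπ : RationalPartition a b π) :
    ∃ π' : Finpartition (univ : Finset (Fin n)),
      IsFNE3 a b π' ∧ welfare a b π ≤ welfare a b π' := by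
  suffices H : ∀ m : ℕ, ∀ π : Finpartition (univ : Finset (Fin n)),
      RationalPartition a b π →
      (n + 1) * (n * 2 ^ (binSize a (univ : Finset (Fin n))) + 1) - psi a b π ≤ m →
      ∃ π', IsFNE3 a b π' ∧ welfare a b π ≤ welfare a b π' by
    exact H _ π hπ le_rfl
  intro m
  induction m with
  | zero =>
    intro π hπr hm
    exfalso
    have := psi_lt a b π
    omega
  | succ m ih =>
    intro π hπr hm
    by_cases hfne : IsFNE3 a b π
    · exact ⟨π, hfne, le_rfl⟩
    · have hB : ∃ (j : Fin n) (Bi E : Finset (Fin n)), Bi ∈ π.parts ∧ j ∉ Bi ∧ E ⊆ Bi ∧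
          MinimalCovered a b (insert j (Bi \ E)) ∧
          ((binSize a (Bi \ E) + a j : ℕ) : ℕ∞) <
            min (delta a b Bi) (delta a b (π.part j)) := by
        by_contra hc
        exact hfne ⟨hπr, fun ⟨j, Bi, E, h1, h2, h3, h4, h5⟩ => hc ⟨j, Bi, E, h1, h2, h3, h4, h5⟩⟩
      obtain ⟨j, Bi, E, h1, h2, h3, h4, h5⟩ := hB
      obtain ⟨π'', hrat'', hw'', hpsi''⟩ := improve a b ha hab π hπr j Bi E h1 h2 h3 h4 h5
      have hm'' : (n + 1) * (n * 2 ^ (binSize a (univ : Finset (Fin n))) + 1) -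
          psi a b π'' ≤ m := by
        have := psi_lt a b π
        omega
      obtain ⟨π', hfne', hw'⟩ := ih π'' hrat'' hm''
      exact ⟨π', hfne', le_trans hw'' hw'⟩
end
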